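/- Let f be an entire function in three variables and g an entire function in two variables over C satisfying: (i) f(X+Y,Z,W) − f(Y,Z,W) − f(X,Y+Z,W) + f(X,Y,Z+W) − f(X,Y,Z) = 0; (ii) g(X+Y,Z) − g(Y,Z) − g(X,Z) − f(X,Y,Z) + f(X,Z,Y) − f(Z,X,Y) = 0; (iii) g(X,Y+Z) − g(X,Y) − g(X,Z) + f(X,Y,Z) − f(Y,X,Z) + f(Y,Z,X) = 0; (iv) g(X,Y) + g(Y,X) = 0; (v) g(X,X) = 0. Then there exists an entire function h in two variables over C such that f(X,Y,Z) = h(X+Y,Z) − h(Y,Z) − h(X,Y+Z) + h(X,Y) and g(X,Y) = h(X,Y) − h(Y,X). -/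

import Mathlib

/-- A formal power series in `n` variables over a normed ring is *entire* if for every
`r > 0` its coefficients satisfy `‖a_α‖ · r^|α| → 0` as `|α| → ∞`. -/
def MvPowerSeries.IsEntire {C : Type*} [NormedRing C] {n : ℕ}
    (f : MvPowerSeries (Fin n) C) : Prop :=
  ∀ r : ℝ, 0 < r → ∀ ε : ℝ, 0 < ε → ∃ N : ℕ, ∀ d : Fin n →₀ ℕ,
    N ≤ ∑ i, d i → ‖MvPowerSeries.coeff d f‖ * r ^ (∑ i, d i) < ε

/-- Substitution of (pairwise disjoint) sums of variables into a formal power series: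
given `s : Fin m → Finset (Fin n)`, substitute `∑_{i ∈ s j} Xᵢ` for the `j`-th variable
of `f`. -/
noncomputable def MvPowerSeries.substAdd {C : Type*} [CommRing C] {n m : ℕ}
    (s : Fin m → Finset (Fin n)) (f : MvPowerSeries (Fin m) C) :
    MvPowerSeries (Fin n) C :=
  fun α : Fin n →₀ ℕ =>
    if α.support ⊆ Finset.univ.biUnion s then
      (∏ j : Fin m, (Nat.multinomial (s j) α : C)) *
        MvPowerSeries.coeff (Finsupp.equivFunOnFinite.symm fun j => ∑ i ∈ s j, α i) f
    else 0

open MvPowerSeries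


section Aux

noncomputable def e2 (a b : ℕ) : Fin 2 →₀ ℕ := Finsupp.equivFunOnFinite.symm ![a,b]
noncomputable def e3 (a b c : ℕ) : Fin 3 →₀ ℕ := Finsupp.equivFunOnFinite.symm ![a,b,c]
noncomputable def e4 (a b c d : ℕ) : Fin 4 →₀ ℕ := Finsupp.equivFunOnFinite.symm ![a,b,c,d]

@[simp] lemma e2_apply (a b : ℕ) (i : Fin 2) : e2 a b i = ![a,b] i := rfl
@[simp] lemma e3_apply (a b c : ℕ) (i : Fin 3) : e3 a b c i = ![a,b,c] i := rfl
@[simp] lemma e4_apply (a b c d : ℕ) (i : Fin 4) : e4 a b c d i = ![a,b,c,d] i := rfl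

lemma e2_eta (α : Fin 2 →₀ ℕ) : α = e2 (α 0) (α 1) := by
  ext i; fin_cases i <;> simp

lemma e3_eta (α : Fin 3 →₀ ℕ) : α = e3 (α 0) (α 1) (α 2) := by
  ext i; fin_cases i <;> simp

lemma e2_sum (a b : ℕ) : ∑ i, (e2 a b) i = a + b := by
  rw [Fin.sum_univ_two]; simp

lemma e3_sum (a b c : ℕ) : ∑ i, (e3 a b c) i = a + b + c := by
  rw [Fin.sum_univ_three]; simp

variable {C : Type*} [CommRing C]

lemma substAdd_coeff {n m : ℕ} (s : Fin m → Finset (Fin n)) (F : MvPowerSeries (Fin m) C) (α : Fin n →₀ ℕ) :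
    coeff α (substAdd s F) = if α.support ⊆ Finset.univ.biUnion s then
      (∏ j : Fin m, (Nat.multinomial (s j) α : C)) *
        coeff (Finsupp.equivFunOnFinite.symm fun j => ∑ i ∈ s j, α i) F else 0 := rfl

lemma coeff_A1 (F : MvPowerSeries (Fin 3) C) (a b c d : ℕ) :
    coeff (e4 a b c d) (substAdd (![{0,1},{2},{3}] : Fin 3 → Finset (Fin 4)) F) = (((a+b).choose a : ℕ) : C) * coeff (e3 (a+b) c d) F := by
  rw [substAdd_coeff, if_pos]
  · have hidx : (Finsupp.equivFunOnFinite.symm fun j => ∑ i ∈ (![{0,1},{2},{3}] : Fin 3 → Finset (Fin 4)) j, (e4 a b c d) i) = e3 (a+b) c d := by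
      ext j
      fin_cases j <;> simp [Finset.sum_pair (by decide : (0:Fin 4) ≠ 1)]
    rw [hidx, Fin.prod_univ_three]
    simp [Nat.binomial_eq_choose (by decide : (0:Fin 4) ≠ 1)]
  · have hb : Finset.univ.biUnion (![{0,1},{2},{3}] : Fin 3 → Finset (Fin 4)) = Finset.univ := by decide
    rw [hb]; exact Finset.subset_univ _

lemma coeff_A2 (F : MvPowerSeries (Fin 3) C) (a b c d : ℕ) :
    coeff (e4 a b c d) (substAdd (![{1},{2},{3}] : Fin 3 → Finset (Fin 4)) F) = if a = 0 then coeff (e3 b c d) F else 0 := by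
  rw [substAdd_coeff]
  have hb : Finset.univ.biUnion (![{1},{2},{3}] : Fin 3 → Finset (Fin 4)) = ({1,2,3} : Finset (Fin 4)) := by decide
  rw [hb]
  have hcond : ((e4 a b c d).support ⊆ ({1,2,3} : Finset (Fin 4))) ↔ a = 0 := by
    constructor
    · intro h
      by_contra hv
      have h0 : (0 : Fin 4) ∈ ({1,2,3} : Finset (Fin 4)) :=
        h (Finsupp.mem_support_iff.mpr (by simpa using hv))
      simp at h0
    · intro hv i hi
      rw [Finsupp.mem_support_iff] at hi
      fin_cases i <;> simp_all
  by_cases hv : a = 0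
  · rw [if_pos (hcond.mpr hv), if_pos hv]
    have hidx : (Finsupp.equivFunOnFinite.symm fun j => ∑ i ∈ (![{1},{2},{3}] : Fin 3 → Finset (Fin 4)) j, (e4 a b c d) i) = e3 b c d := by
      ext j; fin_cases j <;> simp
    rw [hidx, Fin.prod_univ_three]
    simp
  · rw [if_neg (fun hh => hv (hcond.mp hh)), if_neg hv]

lemma coeff_A3 (F : MvPowerSeries (Fin 3) C) (a b c d : ℕ) :
    coeff (e4 a b c d) (substAdd (![{0},{1,2},{3}] : Fin 3 → Finset (Fin 4)) F) = (((b+c).choose b : ℕ) : C) * coeff (e3 a (b+c) d) F := by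
  rw [substAdd_coeff, if_pos]
  · have hidx : (Finsupp.equivFunOnFinite.symm fun j => ∑ i ∈ (![{0},{1,2},{3}] : Fin 3 → Finset (Fin 4)) j, (e4 a b c d) i) = e3 a (b+c) d := by
      ext j
      fin_cases j <;> simp [Finset.sum_pair (by decide : (1:Fin 4) ≠ 2)]
    rw [hidx, Fin.prod_univ_three]
    simp [Nat.binomial_eq_choose (by decide : (1:Fin 4) ≠ 2)]
  · have hb : Finset.univ.biUnion (![{0},{1,2},{3}] : Fin 3 → Finset (Fin 4)) = Finset.univ := by decide
    rw [hb]; exact Finset.subset_univ _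

lemma coeff_A4 (F : MvPowerSeries (Fin 3) C) (a b c d : ℕ) :
    coeff (e4 a b c d) (substAdd (![{0},{1},{2,3}] : Fin 3 → Finset (Fin 4)) F) = (((c+d).choose c : ℕ) : C) * coeff (e3 a b (c+d)) F := by
  rw [substAdd_coeff, if_pos]
  · have hidx : (Finsupp.equivFunOnFinite.symm fun j => ∑ i ∈ (![{0},{1},{2,3}] : Fin 3 → Finset (Fin 4)) j, (e4 a b c d) i) = e3 a b (c+d) := by
      ext j
      fin_cases j <;> simp [Finset.sum_pair (by decide : (2:Fin 4) ≠ 3)]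
    rw [hidx, Fin.prod_univ_three]
    simp [Nat.binomial_eq_choose (by decide : (2:Fin 4) ≠ 3)]
  · have hb : Finset.univ.biUnion (![{0},{1},{2,3}] : Fin 3 → Finset (Fin 4)) = Finset.univ := by decide
    rw [hb]; exact Finset.subset_univ _

lemma coeff_A5 (F : MvPowerSeries (Fin 3) C) (a b c d : ℕ) :
    coeff (e4 a b c d) (substAdd (![{0},{1},{2}] : Fin 3 → Finset (Fin 4)) F) = if d = 0 then coeff (e3 a b c) F else 0 := by
  rw [substAdd_coeff]
  have hb : Finset.univ.biUnion (![{0},{1},{2}] : Fin 3 → Finset (Fin 4)) = ({0,1,2} : Finset (Fin 4)) := by decide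
  rw [hb]
  have hcond : ((e4 a b c d).support ⊆ ({0,1,2} : Finset (Fin 4))) ↔ d = 0 := by
    constructor
    · intro h
      by_contra hv
      have h0 : (3 : Fin 4) ∈ ({0,1,2} : Finset (Fin 4)) :=
        h (Finsupp.mem_support_iff.mpr (by simpa using hv))
      simp at h0
    · intro hv i hi
      rw [Finsupp.mem_support_iff] at hi
      fin_cases i <;> simp_all
  by_cases hv : d = 0
  · rw [if_pos (hcond.mpr hv), if_pos hv]
    have hidx : (Finsupp.equivFunOnFinite.symm fun j => ∑ i ∈ (![{0},{1},{2}] : Fin 3 → Finset (Fin 4)) j, (e4 a b c d) i) = e3 a b c := by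
      ext j; fin_cases j <;> simp
    rw [hidx, Fin.prod_univ_three]
    simp
  · rw [if_neg (fun hh => hv (hcond.mp hh)), if_neg hv]

lemma coeff_B1 (F : MvPowerSeries (Fin 2) C) (a b c : ℕ) :
    coeff (e3 a b c) (substAdd (![{0,1},{2}] : Fin 2 → Finset (Fin 3)) F) = (((a+b).choose a : ℕ) : C) * coeff (e2 (a+b) c) F := by
  rw [substAdd_coeff, if_pos]
  · have hidx : (Finsupp.equivFunOnFinite.symm fun j => ∑ i ∈ (![{0,1},{2}] : Fin 2 → Finset (Fin 3)) j, (e3 a b c) i) = e2 (a+b) c := by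
      ext j
      fin_cases j <;> simp [Finset.sum_pair (by decide : (0:Fin 3) ≠ 1)]
    rw [hidx, Fin.prod_univ_two]
    simp [Nat.binomial_eq_choose (by decide : (0:Fin 3) ≠ 1)]
  · have hb : Finset.univ.biUnion (![{0,1},{2}] : Fin 2 → Finset (Fin 3)) = Finset.univ := by decide
    rw [hb]; exact Finset.subset_univ _

lemma coeff_B2 (F : MvPowerSeries (Fin 2) C) (a b c : ℕ) :
    coeff (e3 a b c) (substAdd (![{1},{2}] : Fin 2 → Finset (Fin 3)) F) = if a = 0 then coeff (e2 b c) F else 0 := by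
  rw [substAdd_coeff]
  have hb : Finset.univ.biUnion (![{1},{2}] : Fin 2 → Finset (Fin 3)) = ({1,2} : Finset (Fin 3)) := by decide
  rw [hb]
  have hcond : ((e3 a b c).support ⊆ ({1,2} : Finset (Fin 3))) ↔ a = 0 := by
    constructor
    · intro h
      by_contra hv
      have h0 : (0 : Fin 3) ∈ ({1,2} : Finset (Fin 3)) :=
        h (Finsupp.mem_support_iff.mpr (by simpa using hv))
      simp at h0
    · intro hv i hi
      rw [Finsupp.mem_support_iff] at hi
      fin_cases i <;> simp_all
  by_cases hv : a = 0
  · rw [if_pos (hcond.mpr hv), if_pos hv]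
    have hidx : (Finsupp.equivFunOnFinite.symm fun j => ∑ i ∈ (![{1},{2}] : Fin 2 → Finset (Fin 3)) j, (e3 a b c) i) = e2 b c := by
      ext j; fin_cases j <;> simp
    rw [hidx, Fin.prod_univ_two]
    simp
  · rw [if_neg (fun hh => hv (hcond.mp hh)), if_neg hv]

lemma coeff_B3 (F : MvPowerSeries (Fin 2) C) (a b c : ℕ) :
    coeff (e3 a b c) (substAdd (![{0},{2}] : Fin 2 → Finset (Fin 3)) F) = if b = 0 then coeff (e2 a c) F else 0 := by
  rw [substAdd_coeff]
  have hb : Finset.univ.biUnion (![{0},{2}] : Fin 2 → Finset (Fin 3)) = ({0,2} : Finset (Fin 3)) := by decide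
  rw [hb]
  have hcond : ((e3 a b c).support ⊆ ({0,2} : Finset (Fin 3))) ↔ b = 0 := by
    constructor
    · intro h
      by_contra hv
      have h0 : (1 : Fin 3) ∈ ({0,2} : Finset (Fin 3)) :=
        h (Finsupp.mem_support_iff.mpr (by simpa using hv))
      simp at h0
    · intro hv i hi
      rw [Finsupp.mem_support_iff] at hi
      fin_cases i <;> simp_all
  by_cases hv : b = 0
  · rw [if_pos (hcond.mpr hv), if_pos hv]
    have hidx : (Finsupp.equivFunOnFinite.symm fun j => ∑ i ∈ (![{0},{2}] : Fin 2 → Finset (Fin 3)) j, (e3 a b c) i) = e2 a c := by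
      ext j; fin_cases j <;> simp
    rw [hidx, Fin.prod_univ_two]
    simp
  · rw [if_neg (fun hh => hv (hcond.mp hh)), if_neg hv]

lemma coeff_B4 (F : MvPowerSeries (Fin 2) C) (a b c : ℕ) :
    coeff (e3 a b c) (substAdd (![{0},{1,2}] : Fin 2 → Finset (Fin 3)) F) = (((b+c).choose b : ℕ) : C) * coeff (e2 a (b+c)) F := by
  rw [substAdd_coeff, if_pos]
  · have hidx : (Finsupp.equivFunOnFinite.symm fun j => ∑ i ∈ (![{0},{1,2}] : Fin 2 → Finset (Fin 3)) j, (e3 a b c) i) = e2 a (b+c) := by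
      ext j
      fin_cases j <;> simp [Finset.sum_pair (by decide : (1:Fin 3) ≠ 2)]
    rw [hidx, Fin.prod_univ_two]
    simp [Nat.binomial_eq_choose (by decide : (1:Fin 3) ≠ 2)]
  · have hb : Finset.univ.biUnion (![{0},{1,2}] : Fin 2 → Finset (Fin 3)) = Finset.univ := by decide
    rw [hb]; exact Finset.subset_univ _

lemma coeff_B5 (F : MvPowerSeries (Fin 2) C) (a b c : ℕ) :
    coeff (e3 a b c) (substAdd (![{0},{1}] : Fin 2 → Finset (Fin 3)) F) = if c = 0 then coeff (e2 a b) F else 0 := by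
  rw [substAdd_coeff]
  have hb : Finset.univ.biUnion (![{0},{1}] : Fin 2 → Finset (Fin 3)) = ({0,1} : Finset (Fin 3)) := by decide
  rw [hb]
  have hcond : ((e3 a b c).support ⊆ ({0,1} : Finset (Fin 3))) ↔ c = 0 := by
    constructor
    · intro h
      by_contra hv
      have h0 : (2 : Fin 3) ∈ ({0,1} : Finset (Fin 3)) :=
        h (Finsupp.mem_support_iff.mpr (by simpa using hv))
      simp at h0
    · intro hv i hi
      rw [Finsupp.mem_support_iff] at hi
      fin_cases i <;> simp_all
  by_cases hv : c = 0
  · rw [if_pos (hcond.mpr hv), if_pos hv]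
    have hidx : (Finsupp.equivFunOnFinite.symm fun j => ∑ i ∈ (![{0},{1}] : Fin 2 → Finset (Fin 3)) j, (e3 a b c) i) = e2 a b := by
      ext j; fin_cases j <;> simp
    rw [hidx, Fin.prod_univ_two]
    simp
  · rw [if_neg (fun hh => hv (hcond.mp hh)), if_neg hv]

lemma coeff_C1 (F : MvPowerSeries (Fin 3) C) (a b c : ℕ) :
    coeff (e3 a b c) (substAdd (![{0},{2},{1}] : Fin 3 → Finset (Fin 3)) F) = coeff (e3 a c b) F := by
  rw [substAdd_coeff, if_pos]
  · have hidx : (Finsupp.equivFunOnFinite.symm fun j => ∑ i ∈ (![{0},{2},{1}] : Fin 3 → Finset (Fin 3)) j, (e3 a b c) i) = e3 a c b := by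
      ext j
      fin_cases j <;> simp
    rw [hidx, Fin.prod_univ_three]
    simp
  · have hb : Finset.univ.biUnion (![{0},{2},{1}] : Fin 3 → Finset (Fin 3)) = Finset.univ := by decide
    rw [hb]; exact Finset.subset_univ _

lemma coeff_C2 (F : MvPowerSeries (Fin 3) C) (a b c : ℕ) :
    coeff (e3 a b c) (substAdd (![{2},{0},{1}] : Fin 3 → Finset (Fin 3)) F) = coeff (e3 c a b) F := by
  rw [substAdd_coeff, if_pos]
  · have hidx : (Finsupp.equivFunOnFinite.symm fun j => ∑ i ∈ (![{2},{0},{1}] : Fin 3 → Finset (Fin 3)) j, (e3 a b c) i) = e3 c a b := by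
      ext j
      fin_cases j <;> simp
    rw [hidx, Fin.prod_univ_three]
    simp
  · have hb : Finset.univ.biUnion (![{2},{0},{1}] : Fin 3 → Finset (Fin 3)) = Finset.univ := by decide
    rw [hb]; exact Finset.subset_univ _

lemma coeff_D1 (F : MvPowerSeries (Fin 2) C) (a b : ℕ) :
    coeff (e2 a b) (substAdd (![{1},{0}] : Fin 2 → Finset (Fin 2)) F) = coeff (e2 b a) F := by
  rw [substAdd_coeff, if_pos]
  · have hidx : (Finsupp.equivFunOnFinite.symm fun j => ∑ i ∈ (![{1},{0}] : Fin 2 → Finset (Fin 2)) j, (e2 a b) i) = e2 b a := by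
      ext j
      fin_cases j <;> simp
    rw [hidx, Fin.prod_univ_two]
    simp
  · have hb : Finset.univ.biUnion (![{1},{0}] : Fin 2 → Finset (Fin 2)) = Finset.univ := by decide
    rw [hb]; exact Finset.subset_univ _


end Aux

section Scalar
variable {K : Type*} [Field K] [CharZero K]

noncomputable def hcoef (fc : ℕ → ℕ → ℕ → K) : ℕ → ℕ → K
  | 0, b => -fc 0 0 b
  | (a+1), b => ((a+1 : ℕ) : K)⁻¹ * fc 1 a b

theorem scalarF (fc : ℕ → ℕ → ℕ → K)
    (I : ∀ a b c d : ℕ, (((a+b).choose a : ℕ) : K) * fc (a+b) c d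
        - (if a = 0 then fc b c d else 0)
        - (((b+c).choose b : ℕ) : K) * fc a (b+c) d
        + (((c+d).choose c : ℕ) : K) * fc a b (c+d)
        - (if d = 0 then fc a b c else 0) = 0) :
    ∀ a b c : ℕ, fc a b c = (((a+b).choose a : ℕ) : K) * hcoef fc (a+b) c
        - (if a = 0 then hcoef fc b c else 0)
        - (((b+c).choose b : ℕ) : K) * hcoef fc a (b+c)
        + (if c = 0 then hcoef fc a b else 0) := by
  intro a b c
  match a with
  | 0 =>
    have hI := I 0 0 b c
    have h0 : ∀ m, hcoef fc 0 m = -fc 0 0 m := fun m => rfl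
    simp only [Nat.zero_add, Nat.add_zero, Nat.choose_zero_right, Nat.choose_self, Nat.cast_one,
      one_mul, reduceIte, h0] at hI ⊢
    by_cases hc : c = 0
    · simp only [hc, Nat.add_zero, Nat.choose_self, Nat.cast_one, reduceIte] at hI ⊢
      linear_combination -hI
    · simp only [hc, reduceIte] at hI ⊢
      linear_combination -hI
  | (a'+1) =>
    have hI := I 1 a' b c
    rw [if_neg (by omega : ¬ (1:ℕ) = 0)] at hI
    rw [(by omega : (1:ℕ) + a' = a' + 1), Nat.choose_one_right] at hI
    rw [(by omega : a' + 1 + b = (a' + b) + 1)]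
    rw [if_neg (by omega : ¬ a'+1 = 0)]
    have key : ((a'+b+1 : ℕ) : K) * (((a'+b).choose a' : ℕ) : K)
        = (((a'+b+1).choose (a'+1) : ℕ) : K) * ((a'+1 : ℕ) : K) := by
      exact_mod_cast congrArg (fun t : ℕ => (t : K)) (Nat.add_one_mul_choose_eq (a'+b) a')
    have hne1 : ((a'+1 : ℕ) : K) ≠ 0 := Nat.cast_ne_zero.mpr (by omega)
    have hne2 : ((a'+b+1 : ℕ) : K) ≠ 0 := Nat.cast_ne_zero.mpr (by omega)
    have hm1 : ((a'+b+1 : ℕ) : K) * hcoef fc (a'+b+1) c = fc 1 (a'+b) c := by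
      simp only [hcoef]; rw [← mul_assoc, mul_inv_cancel₀ hne2, one_mul]
    have hm2 : ((a'+1 : ℕ) : K) * hcoef fc (a'+1) (b+c) = fc 1 a' (b+c) := by
      simp only [hcoef]; rw [← mul_assoc, mul_inv_cancel₀ hne1, one_mul]
    have hm3 : ((a'+1 : ℕ) : K) * hcoef fc (a'+1) b = fc 1 a' b := by
      simp only [hcoef]; rw [← mul_assoc, mul_inv_cancel₀ hne1, one_mul]
    refine mul_left_cancel₀ hne1 ?_
    by_cases hc : c = 0
    · subst hc
      simp only [Nat.add_zero, Nat.choose_self, Nat.cast_one, reduceIte] at hI ⊢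
      linear_combination hI - (((a'+b).choose a' : ℕ) : K) * hm1
        + hcoef fc (a'+b+1) 0 * key
    · simp only [hc, reduceIte] at hI ⊢
      linear_combination hI - (((a'+b).choose a' : ℕ) : K) * hm1
        + (((b+c).choose b : ℕ) : K) * hm2 + hcoef fc (a'+b+1) c * key
theorem scalarG (fc : ℕ → ℕ → ℕ → K) (gc : ℕ → ℕ → K)
    (F : ∀ a b c : ℕ, fc a b c = (((a+b).choose a : ℕ) : K) * hcoef fc (a+b) c
        - (if a = 0 then hcoef fc b c else 0)
        - (((b+c).choose b : ℕ) : K) * hcoef fc a (b+c)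
        + (if c = 0 then hcoef fc a b else 0))
    (II : ∀ a b c : ℕ, (((a+b).choose a : ℕ) : K) * gc (a+b) c
        - (if a = 0 then gc b c else 0) - (if b = 0 then gc a c else 0)
        - fc a b c + fc a c b - fc c a b = 0)
    (IV : ∀ a b : ℕ, gc a b + gc b a = 0) :
    ∀ a b : ℕ, gc a b = hcoef fc a b - hcoef fc b a := by
  set hc := hcoef fc with hhc
  -- the deviation is biadditive in the first two slots
  have delta : ∀ a b c : ℕ, (((a+b).choose a : ℕ) : K) * (gc (a+b) c - hc (a+b) c + hc c (a+b))
      - (if a = 0 then gc b c else 0) + (if a = 0 then hc b c else 0) - (if a = 0 then hc c b else 0)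
      - (if b = 0 then gc a c else 0) + (if b = 0 then hc a c else 0) - (if b = 0 then hc c a else 0)
      = 0 := by
    intro a b c
    have F1 := F a b c
    have F2 := F a c b
    have e1 : ((c+b).choose c) = ((b+c).choose b) := by
      rw [Nat.choose_symm_add, Nat.add_comm]
    rw [e1, Nat.add_comm c b] at F2
    have F3 := F c a b
    have e2 : ((c+a).choose c) = ((a+c).choose a) := by
      rw [Nat.choose_symm_add, Nat.add_comm]
    rw [e2, Nat.add_comm c a] at F3
    linear_combination II a b c + F1 - F2 + F3
  have DSym : ∀ a b : ℕ, (gc a b - hc a b + hc b a) + (gc b a - hc b a + hc a b) = 0 := by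
    intro a b; linear_combination IV a b
  have D0 : ∀ c, gc 0 c - hc 0 c + hc c 0 = 0 := by
    intro c
    have := delta 0 0 c
    simp only [Nat.add_zero, Nat.zero_add, Nat.choose_self, Nat.cast_one, one_mul, reduceIte] at this
    linear_combination -this
  have Dge2 : ∀ k c : ℕ, gc (k+2) c - hc (k+2) c + hc c (k+2) = 0 := by
    intro k c
    have := delta 1 (k+1) c
    simp only [if_neg (show ¬(1:ℕ) = 0 by omega), if_neg (show ¬k+1 = 0 by omega),
      (show (1:ℕ)+(k+1) = k+2 by omega), Nat.choose_one_right] at this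
    have hne : ((k+2 : ℕ) : K) ≠ 0 := Nat.cast_ne_zero.mpr (by omega)
    have := mul_left_cancel₀ hne (by linear_combination this :
      ((k+2 : ℕ) : K) * (gc (k+2) c - hc (k+2) c + hc c (k+2)) = ((k+2 : ℕ) : K) * 0)
    linear_combination this
  have D : ∀ a b : ℕ, gc a b - hc a b + hc b a = 0 := by
    intro a b
    match a with
    | 0 => exact D0 b
    | (k+2) => exact Dge2 k b
    | 1 =>
      match b with
      | 0 => linear_combination DSym 1 0 - D0 1
      | (k+2) => linear_combination DSym 1 (k+2) - Dge2 k 1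
      | 1 =>
        have h2 : (2 : K) ≠ 0 := two_ne_zero
        have := DSym 1 1
        have := mul_left_cancel₀ h2 (by linear_combination this :
          (2:K) * (gc 1 1 - hc 1 1 + hc 1 1) = (2:K) * 0)
        linear_combination this
  intro a b
  linear_combination D a b
end Scalar


lemma one_div_le_padic_norm_nat (p : ℕ) [Fact p.Prime] (k : ℕ) (hk : k ≠ 0) :
    1/(k:ℝ) ≤ ‖(k : ℚ_[p])‖ := by
  have hk0 : ((k : ℚ_[p])) ≠ 0 := Nat.cast_ne_zero.mpr hk
  rw [Padic.norm_eq_zpow_neg_valuation hk0, Padic.valuation_natCast, zpow_neg, zpow_natCast, one_div]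
  have hple : (p : ℝ) ^ padicValNat p k ≤ (k : ℝ) := by
    exact_mod_cast Nat.cast_le.mpr (Nat.le_of_dvd (Nat.pos_of_ne_zero hk) pow_padicValNat_dvd)
  have hp0 : (0:ℝ) < (p:ℝ) := by exact_mod_cast (Fact.out : p.Prime).pos
  exact inv_anti₀ (by positivity) hple

/-- Over `C = ℂ_p` (formalized as a complete algebraically closed
nonarchimedean normed field with an isometric embedding of `ℚ_p`), entire functions
`f` (three variables) and `g` (two variables) satisfying the stabilized 3-cocycle
relations (i)–(v) are jointly a coboundary: there is an entire two-variable `h` with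
`f(X,Y,Z) = h(X+Y,Z) − h(Y,Z) − h(X,Y+Z) + h(X,Y)` and `g(X,Y) = h(X,Y) − h(Y,X)`.
Hypothesis (v), `g(X,X) = 0`, is stated coefficientwise: for each `k`, the sum of the
coefficients of `g` over the antidiagonal `{(a,b) | a + b = k}` vanishes. -/
theorem entire_three_cocycle_is_coboundary
    {p : ℕ} [Fact p.Prime]
    (C : Type*) [NormedField C] [CompleteSpace C] [IsUltrametricDist C]
    [IsAlgClosed C] [Algebra ℚ_[p] C]
    (hisom : ∀ q : ℚ_[p], ‖algebraMap ℚ_[p] C q‖ = ‖q‖)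
    (f : MvPowerSeries (Fin 3) C) (g : MvPowerSeries (Fin 2) C)
    (hf : f.IsEntire) (hg : g.IsEntire)
    (h1 : substAdd ![({0, 1} : Finset (Fin 4)), {2}, {3}] f - substAdd ![{1}, {2}, {3}] f
        - substAdd ![{0}, {1, 2}, {3}] f + substAdd ![{0}, {1}, {2, 3}] f
        - substAdd ![{0}, {1}, {2}] f = 0)
    (h2 : substAdd ![({0, 1} : Finset (Fin 3)), {2}] g - substAdd ![{1}, {2}] g
        - substAdd ![{0}, {2}] g - f + substAdd ![{0}, {2}, {1}] f
        - substAdd ![{2}, {0}, {1}] f = 0)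
    (h3 : substAdd ![({0} : Finset (Fin 3)), {1, 2}] g - substAdd ![{0}, {1}] g
        - substAdd ![{0}, {2}] g + f - substAdd ![{1}, {0}, {2}] f
        + substAdd ![{1}, {2}, {0}] f = 0)
    (h4 : g + substAdd ![({1} : Finset (Fin 2)), {0}] g = 0)
    (h5 : ∀ k : ℕ, ∑ ab ∈ Finset.HasAntidiagonal.antidiagonal k,
        MvPowerSeries.coeff (Finsupp.equivFunOnFinite.symm ![ab.1, ab.2]) g = 0) :
    ∃ h : MvPowerSeries (Fin 2) C, h.IsEntire ∧
      f = substAdd ![({0, 1} : Finset (Fin 3)), {2}] h - substAdd ![{1}, {2}] h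
          - substAdd ![{0}, {1, 2}] h + substAdd ![{0}, {1}] h ∧
      g = h - substAdd ![({1} : Finset (Fin 2)), {0}] h := by
  classical
  haveI : CharZero C := charZero_of_injective_algebraMap (algebraMap ℚ_[p] C).injective
  set fc : ℕ → ℕ → ℕ → C := fun a b c => coeff (e3 a b c) f with hfc
  set gc : ℕ → ℕ → C := fun a b => coeff (e2 a b) g with hgc
  have I : ∀ a b c d : ℕ, (((a+b).choose a : ℕ) : C) * fc (a+b) c d
      - (if a = 0 then fc b c d else 0)
      - (((b+c).choose b : ℕ) : C) * fc a (b+c) d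
      + (((c+d).choose c : ℕ) : C) * fc a b (c+d)
      - (if d = 0 then fc a b c else 0) = 0 := by
    intro a b c d
    have hco := congrArg (coeff (e4 a b c d)) h1
    simp only [map_sub, map_add, map_zero, coeff_A1, coeff_A2, coeff_A3, coeff_A4,
      coeff_A5] at hco
    simp only [hfc]
    linear_combination hco
  have II : ∀ a b c : ℕ, (((a+b).choose a : ℕ) : C) * gc (a+b) c
      - (if a = 0 then gc b c else 0) - (if b = 0 then gc a c else 0)
      - fc a b c + fc a c b - fc c a b = 0 := by
    intro a b c
    have hco := congrArg (coeff (e3 a b c)) h2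
    simp only [map_sub, map_add, map_zero, coeff_B1, coeff_B2, coeff_B3, coeff_C1,
      coeff_C2] at hco
    simp only [hfc, hgc]
    linear_combination hco
  have IV : ∀ a b : ℕ, gc a b + gc b a = 0 := by
    intro a b
    have hco := congrArg (coeff (e2 a b)) h4
    simp only [map_add, map_zero, coeff_D1] at hco
    simp only [hgc]
    linear_combination hco
  have F := scalarF fc I
  have G := scalarG fc gc F II IV
  set H : MvPowerSeries (Fin 2) C := fun α => hcoef fc (α 0) (α 1) with hH
  refine ⟨H, ?_, ?_, ?_⟩
  · -- entireness
    intro r hr ε hε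
    obtain ⟨N, hN⟩ := hf (2*r) (by linarith) ε hε
    refine ⟨N, fun d hd => ?_⟩
    have hsum : ∑ i, d i = d 0 + d 1 := Fin.sum_univ_two _
    have hco : coeff d H
        = hcoef fc (d 0) (d 1) := rfl
    rw [hsum] at hd ⊢
    rw [hco]
    have hrle : r ≤ 2*r := by linarith
    cases hd0 : d 0 with
    | zero =>
      rw [hd0] at hd
      have hform : hcoef fc 0 (d 1) = -(fc 0 0 (d 1)) := rfl
      rw [hform, norm_neg]
      have h1' := hN (e3 0 0 (d 1)) (by rw [e3_sum]; omega)
      rw [e3_sum] at h1'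
      calc ‖fc 0 0 (d 1)‖ * r ^ (0 + d 1)
          ≤ ‖fc 0 0 (d 1)‖ * (2*r) ^ (0 + d 1) := by
            gcongr
        _ = ‖coeff (e3 0 0 (d 1)) f‖ * (2*r) ^ (0 + 0 + d 1) := by
            norm_num [hfc]
        _ < ε := h1'
    | succ a =>
      rw [hd0] at hd
      have hform : hcoef fc (a+1) (d 1) = ((a+1 : ℕ) : C)⁻¹ * fc 1 a (d 1) := rfl
      rw [hform]
      have h1' := hN (e3 1 a (d 1)) (by rw [e3_sum]; omega)
      rw [e3_sum] at h1'
      have hnn : ‖((a+1 : ℕ) : C)‖ = ‖((a+1 : ℕ) : ℚ_[p])‖ := by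
        rw [← map_natCast (algebraMap ℚ_[p] C), hisom]
      have hple : 1/((a+1 : ℕ) : ℝ) ≤ ‖((a+1 : ℕ) : ℚ_[p])‖ :=
        one_div_le_padic_norm_nat p (a+1) (by omega)
      have hpos : (0:ℝ) < ‖((a+1 : ℕ) : ℚ_[p])‖ := by
        refine lt_of_lt_of_le ?_ hple
        positivity
      have hinv : ‖((a+1 : ℕ) : C)⁻¹‖ ≤ ((a+1 : ℕ) : ℝ) := by
        rw [norm_inv, hnn]
        calc ‖((a+1 : ℕ) : ℚ_[p])‖⁻¹ ≤ (1/((a+1 : ℕ) : ℝ))⁻¹ :=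
              inv_anti₀ (by positivity) hple
          _ = ((a+1 : ℕ) : ℝ) := by rw [one_div, inv_inv]
      have hpow : ((a+1 : ℕ) : ℝ) * r ^ (a + 1 + d 1) ≤ (2*r) ^ (a + 1 + d 1) := by
        rw [mul_pow]
        have h2n : ((a+1 : ℕ) : ℝ) ≤ (2:ℝ) ^ (a + 1 + d 1) := by
          have hle : (a+1 : ℕ) ≤ 2 ^ (a + 1 + d 1) :=
            le_trans (by omega) (Nat.lt_two_pow_self (n := a + 1 + d 1)).le
          exact_mod_cast hle
        gcongr
      calc ‖((a+1 : ℕ) : C)⁻¹ * fc 1 a (d 1)‖ * r ^ (a + 1 + d 1)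
          = ‖((a+1 : ℕ) : C)⁻¹‖ * ‖fc 1 a (d 1)‖ * r ^ (a + 1 + d 1) := by
            rw [norm_mul]
        _ ≤ ((a+1 : ℕ) : ℝ) * ‖fc 1 a (d 1)‖ * r ^ (a + 1 + d 1) := by
            gcongr
        _ = ‖fc 1 a (d 1)‖ * (((a+1 : ℕ) : ℝ) * r ^ (a + 1 + d 1)) := by ring
        _ ≤ ‖fc 1 a (d 1)‖ * (2*r) ^ (a + 1 + d 1) := by
            gcongr
        _ = ‖coeff (e3 1 a (d 1)) f‖ * (2*r) ^ (1 + a + d 1) := by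
            rw [(by omega : 1 + a + d 1 = a + 1 + d 1)]
        _ < ε := h1'
  · -- f identity
    apply MvPowerSeries.ext
    intro α
    rw [e3_eta α]
    simp only [map_sub, map_add, coeff_B1, coeff_B2, coeff_B3, coeff_B4, coeff_B5]
    have hco : ∀ x y : ℕ, coeff (e2 x y)
        H = hcoef fc x y := fun _ _ => rfl
    simp only [hco]
    have := F (α 0) (α 1) (α 2)
    simp only [hfc] at this ⊢
    linear_combination this
  · -- g identity
    apply MvPowerSeries.ext
    intro α
    rw [e2_eta α]
    simp only [map_sub, coeff_D1]
    have hco : ∀ x y : ℕ, coeff (e2 x y)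
        H = hcoef fc x y := fun _ _ => rfl
    simp only [hco]
    have := G (α 0) (α 1)
    simp only [hgc, hfc] at this ⊢
    linear_combination this
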